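/- Let u_1,…,u_k be unit vectors in ℝ^n and λ_i > 0 with ∑ λ_i u_i u_i^T = I_n and ∑ λ_i u_i = 0. If a symmetric positive definite matrix X and c ∈ ℝ^n satisfy ⟨X(u_i−c), u_i−c⟩ ≤ 1 for all i and det X = 1 and ⟨Xc,c⟩ = 0, then X = I_n and c = 0. -/

import Mathlib

open scoped RealInnerProductSpace
open Matrix

/-- Equality case of the key lemma: under the John conditions, a circumscribing ellipsoid
`E(X,c)` with `det X = 1` and `⟨Xc,c⟩ = 0` must be the unit ball, i.e. `X = I` and `c = 0`. -/
theorem equality_case_unit_ball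
    (n k : ℕ) (u : Fin k → EuclideanSpace ℝ (Fin n)) (lam : Fin k → ℝ)
    (hlam : ∀ i, 0 < lam i) (hu : ∀ i, ‖u i‖ = 1)
    (hsum : ∑ i, lam i • Matrix.vecMulVec (u i) (u i) = (1 : Matrix (Fin n) (Fin n) ℝ))
    (hcen : ∑ i, lam i • u i = 0)
    (X : Matrix (Fin n) (Fin n) ℝ) (hX : X.IsSymm) (hXpd : X.PosDef)
    (c : EuclideanSpace ℝ (Fin n))
    (hfeas : ∀ i, ⟪Matrix.toEuclideanLin X (u i - c), u i - c⟫ ≤ 1)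
    (hdet : X.det = 1) (hc : ⟪Matrix.toEuclideanLin X c, c⟫ = 0) :
    X = (1 : Matrix (Fin n) (Fin n) ℝ) ∧ c = 0 := by
  classical
  have hinner : ∀ y : EuclideanSpace ℝ (Fin n),
      ⟪Matrix.toEuclideanLin X y, y⟫ = (X *ᵥ (y : Fin n → ℝ)) ⬝ᵥ (y : Fin n → ℝ) := by
    intro y
    simp [toEuclideanLin_apply, PiLp.inner_apply, dotProduct, mul_comm]
  -- c = 0
  have hc0 : c = 0 := by
    by_contra h
    have hpos := hXpd.dotProduct_mulVec_pos (x := (c : Fin n → ℝ)) (by exact fun hz => h (by ext i; exact congrFun hz i))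
    rw [hinner c] at hc
    simp only [star_trivial] at hpos
    rw [dotProduct_comm, hc] at hpos
    exact lt_irrefl 0 hpos
  subst hc0
  -- feasibility simplifies
  have hfeas' : ∀ i, (X *ᵥ (u i : Fin n → ℝ)) ⬝ᵥ (u i : Fin n → ℝ) ≤ 1 := by
    intro i
    have := hfeas i
    rw [sub_zero] at this
    rwa [hinner (u i)] at this
  -- trace of a rank-one matrix
  have htr1 : ∀ i, Matrix.trace (vecMulVec ((u i) : Fin n → ℝ) (u i)) = 1 := by
    intro i
    have h2 := real_inner_self_eq_norm_sq (u i)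
    rw [hu i] at h2
    rw [PiLp.inner_apply] at h2
    simp at h2
    simpa [Matrix.trace, vecMulVec, Matrix.diag, ← sq] using h2
  -- ∑ λ = n
  have hlamsum : ∑ i, lam i = (n : ℝ) := by
    have := congrArg Matrix.trace hsum
    simpa [Matrix.trace_sum, htr1] using this
  -- trace X ≤ n
  have htrX : Matrix.trace X = ∑ i, lam i * ((X *ᵥ (u i : Fin n → ℝ)) ⬝ᵥ (u i : Fin n → ℝ)) := by
    have h1 : X * (∑ i, lam i • Matrix.vecMulVec ((u i) : Fin n → ℝ) (u i)) = X := by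
      rw [hsum, mul_one]
    calc Matrix.trace X = Matrix.trace (X * (∑ i, lam i • Matrix.vecMulVec ((u i) : Fin n → ℝ) (u i))) := by rw [h1]
      _ = ∑ i, lam i * Matrix.trace (X * Matrix.vecMulVec ((u i) : Fin n → ℝ) (u i)) := by
          rw [Finset.mul_sum, Matrix.trace_sum]
          congr 1; ext i
          rw [Matrix.mul_smul, Matrix.trace_smul]; rfl
      _ = ∑ i, lam i * ((X *ᵥ (u i : Fin n → ℝ)) ⬝ᵥ (u i : Fin n → ℝ)) := by
          congr 1; ext i; congr 1
          simp [Matrix.trace, vecMulVec, Matrix.diag, Matrix.mul_apply, dotProduct, mulVec,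
            Finset.mul_sum, mul_comm, mul_left_comm]
  have htrle : Matrix.trace X ≤ (n : ℝ) := by
    rw [htrX, ← hlamsum]
    apply Finset.sum_le_sum
    intro i _
    have := hfeas' i
    nlinarith [hlam i, (hlam i).le]
  -- eigenvalues
  have hH : X.IsHermitian := hXpd.1
  set μ := hH.eigenvalues with hμ
  have hμpos : ∀ j, 0 < μ j := hXpd.eigenvalues_pos
  have hprod : ∏ j, μ j = 1 := by
    have := hH.det_eq_prod_eigenvalues
    rw [hdet] at this
    simpa using this.symm
  have htr : Matrix.trace X = ∑ j, μ j := by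
    conv_lhs => rw [hH.spectral_theorem]
    rw [Unitary.conjStarAlgAut_apply, Matrix.trace_mul_cycle]
    have hUs : (star (hH.eigenvectorUnitary : Matrix (Fin n) (Fin n) ℝ)) *
        (hH.eigenvectorUnitary : Matrix (Fin n) (Fin n) ℝ) = 1 :=
      (Matrix.mem_unitaryGroup_iff').mp hH.eigenvectorUnitary.2
    rw [hUs, one_mul, Matrix.trace_diagonal]
    simp
    rfl
  -- each eigenvalue is 1
  have hsum0 : ∑ j, (μ j - 1 - Real.log (μ j)) ≤ 0 := by
    have hlog : ∑ j, Real.log (μ j) = 0 := by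
      rw [← Real.log_prod (fun j _ => (hμpos j).ne'), hprod, Real.log_one]
    have : ∑ j, (μ j - 1 - Real.log (μ j)) = (∑ j, μ j) - n - ∑ j, Real.log (μ j) := by
      rw [Finset.sum_sub_distrib, Finset.sum_sub_distrib]
      simp
    rw [this, hlog, ← htr]
    linarith
  have hterm : ∀ j, 0 ≤ μ j - 1 - Real.log (μ j) := by
    intro j
    have := Real.log_le_sub_one_of_pos (hμpos j)
    linarith
  have hall : ∀ j, μ j = 1 := by
    intro j
    by_contra hne
    have hlt := Real.log_lt_sub_one_of_pos (hμpos j) hne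
    have : 0 < ∑ j, (μ j - 1 - Real.log (μ j)) := by
      apply Finset.sum_pos' (fun i _ => hterm i)
      exact ⟨j, Finset.mem_univ j, by linarith⟩
    linarith
  -- conclude X = 1
  refine ⟨?_, rfl⟩
  have : Matrix.diagonal (RCLike.ofReal ∘ μ : Fin n → ℝ) = 1 := by
    rw [show (RCLike.ofReal ∘ μ : Fin n → ℝ) = fun _ => 1 by ext j; simp [hall j]]
    exact Matrix.diagonal_one
  rw [hH.spectral_theorem, Unitary.conjStarAlgAut_apply, this, mul_one]
  exact (Matrix.mem_unitaryGroup_iff).mp hH.eigenvectorUnitary.2
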